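/- For all integers m, a, b ≥ 0 with a + b ≤ m, the following identity holds in ℤ[ν] (both sides being polynomials): Σ_{r=0}^{min(a,b)} (−1)^r · ν^{r(r−1)/2} · [m−r]_ν! / ([a−r]_ν! · [b−r]_ν! · [r]_ν!) = ν^{ab} · [m−a−b]_ν! · binom[ν]{m−b}{a} · binom[ν]{m−a}{b}. -/

import Mathlib

noncomputable section

/-- The quantum integer `[a]_ν = (ν^a - 1)/(ν - 1)` in `ℚ(ν)`. -/
def qint (a : ℕ) : RatFunc ℚ := (RatFunc.X ^ a - 1) / (RatFunc.X - 1)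

/-- The quantum factorial `[a]_ν! = ∏_{j=1}^a [j]_ν` in `ℚ(ν)`. -/
def qfac (a : ℕ) : RatFunc ℚ := ∏ j ∈ Finset.range a, qint (j + 1)

/-- The Gaussian binomial coefficient `binom[ν]{a}{n} = [a]_ν!/([n]_ν! [a-n]_ν!)`. -/
def qbinom (a n : ℕ) : RatFunc ℚ := qfac a / (qfac n * qfac (a - n))

lemma pow_sub_one_ne (a : ℕ) (ha : a ≠ 0) : (RatFunc.X : RatFunc ℚ) ^ a - 1 ≠ 0 := by
  have h1 : ((RatFunc.X : RatFunc ℚ) ^ a - 1)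
      = algebraMap (Polynomial ℚ) (RatFunc ℚ) (Polynomial.X ^ a - 1) := by
    simp [RatFunc.algebraMap_X]
  rw [h1]
  apply RatFunc.algebraMap_ne_zero
  have := Polynomial.X_pow_sub_C_ne_zero (R := ℚ) (Nat.pos_of_ne_zero ha) 1
  simpa using this

lemma qint_ne_zero (a : ℕ) (ha : a ≠ 0) : qint a ≠ 0 := by
  apply div_ne_zero (pow_sub_one_ne a ha)
  have := pow_sub_one_ne 1 one_ne_zero
  simpa using this

lemma X_sub_one_ne : (RatFunc.X : RatFunc ℚ) - 1 ≠ 0 := by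
  have := pow_sub_one_ne 1 one_ne_zero
  simpa using this

lemma qfac_ne_zero (a : ℕ) : qfac a ≠ 0 :=
  Finset.prod_ne_zero_iff.mpr fun j _ => qint_ne_zero (j + 1) (Nat.succ_ne_zero j)

lemma qfac_zero : qfac 0 = 1 := by simp [qfac]

lemma qfac_succ (a : ℕ) : qfac (a + 1) = qfac a * qint (a + 1) :=
  Finset.prod_range_succ _ _

lemma qint_add (x y : ℕ) : qint (x + y) = qint x + RatFunc.X ^ x * qint y := by
  unfold qint
  rw [mul_div_assoc' , ← add_div]
  congr 1
  ring

lemma qbinom_zero (n : ℕ) : qbinom n 0 = 1 := by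
  rw [qbinom, qfac_zero, Nat.sub_zero, one_mul, div_self (qfac_ne_zero n)]

lemma qbinom_self (n : ℕ) : qbinom n n = 1 := by
  rw [qbinom, Nat.sub_self, qfac_zero, mul_one, div_self (qfac_ne_zero n)]

lemma pascal (c d : ℕ) :
    qbinom (c + d + 2) (c + 1)
      = qbinom (c + d + 1) c + RatFunc.X ^ (c + 1) * qbinom (c + d + 1) (c + 1) := by
  rw [qbinom, qbinom, qbinom, show c + d + 2 - (c + 1) = d + 1 from by omega,
    show c + d + 1 - c = d + 1 from by omega, show c + d + 1 - (c + 1) = d from by omega,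
    show c + d + 2 = c + d + 1 + 1 from rfl, qfac_succ (c + d + 1),
    show c + d + 1 + 1 = (c + 1) + (d + 1) from by omega, qint_add (c + 1) (d + 1),
    qfac_succ c, qfac_succ d]
  have h1 := qfac_ne_zero c
  have h2 := qfac_ne_zero d
  have h3 := qfac_ne_zero (c + d + 1)
  have h4 := qint_ne_zero (c + 1) (by omega)
  have h5 := qint_ne_zero (d + 1) (by omega)
  field_simp

lemma pascal' (s e : ℕ) :
    qbinom (s + e + 2) (s + 1)
      = qbinom (s + e + 1) (s + 1) + RatFunc.X ^ (e + 1) * qbinom (s + e + 1) s := by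
  rw [qbinom, qbinom, qbinom, show s + e + 2 - (s + 1) = e + 1 from by omega,
    show s + e + 1 - (s + 1) = e from by omega, show s + e + 1 - s = e + 1 from by omega,
    show s + e + 2 = s + e + 1 + 1 from rfl, qfac_succ (s + e + 1),
    show s + e + 1 + 1 = (e + 1) + (s + 1) from by omega, qint_add (e + 1) (s + 1),
    qfac_succ s, qfac_succ e]
  have h1 := qfac_ne_zero s
  have h2 := qfac_ne_zero e
  have h3 := qfac_ne_zero (s + e + 1)
  have h4 := qint_ne_zero (s + 1) (by omega)
  have h5 := qint_ne_zero (e + 1) (by omega)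
  field_simp

def myQ (a r : ℕ) : RatFunc ℚ := if r ≤ a then qbinom a r else 0

lemma myQ_zero (n : ℕ) : myQ n 0 = 1 := by
  rw [myQ, if_pos (Nat.zero_le n), qbinom_zero]

lemma myQ_pascal (a s : ℕ) :
    myQ (a + 1) (s + 1) = myQ a (s + 1) + RatFunc.X ^ (a - s) * myQ a s := by
  rcases lt_trichotomy s a with h | h | h
  · obtain ⟨e, rfl⟩ : ∃ e, a = s + e + 1 := ⟨a - s - 1, by omega⟩
    rw [myQ, myQ, myQ, if_pos (by omega), if_pos (by omega), if_pos (by omega),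
      show s + e + 1 - s = e + 1 from by omega,
      show s + e + 1 + 1 = s + e + 2 from rfl]
    exact pascal' s e
  · subst h
    rw [myQ, myQ, myQ, if_pos le_rfl, if_neg (by omega), if_pos le_rfl,
      qbinom_self, qbinom_self, Nat.sub_self]
    simp
  · rw [myQ, myQ, myQ, if_neg (by omega), if_neg (by omega), if_neg (by omega)]
    simp

lemma tri (i : ℕ) : (i + 1) * i / 2 = i * (i - 1) / 2 + i := by
  have h1 := Nat.choose_two_right (i + 1)
  have h2 := Nat.choose_two_right i
  have h3 : (i + 1).choose 2 = i.choose 1 + i.choose 2 := Nat.choose_succ_succ i 1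
  rw [Nat.choose_one_right] at h3
  simp only [Nat.add_sub_cancel] at h1
  omega

lemma key : ∀ (a m b : ℕ), a + b ≤ m →
    ∑ r ∈ Finset.range (b + 1),
        ((-1 : RatFunc ℚ) ^ r * RatFunc.X ^ (r * (r - 1) / 2) * myQ a r *
          qbinom (m - r) (b - r))
      = RatFunc.X ^ (a * b) * qbinom (m - a) b := by
  intro a
  induction a with
  | zero =>
    intro m b _
    rw [Finset.sum_eq_single 0]
    · simp [myQ_zero]
    · intro r _ hr
      rw [myQ, if_neg (by omega)]
      ring
    · intro habs
      exact absurd (Finset.mem_range.mpr (by omega)) habs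
  | succ a ih =>
    intro m b hm
    rcases Nat.eq_zero_or_pos b with rfl | hb
    · simp [myQ_zero, qbinom_zero]
    obtain ⟨b', rfl⟩ : ∃ b', b = b' + 1 := ⟨b - 1, by omega⟩
    have hsplit := Finset.sum_range_succ'
      (fun r => ((-1 : RatFunc ℚ) ^ r * RatFunc.X ^ (r * (r - 1) / 2) * myQ (a + 1) r *
        qbinom (m - r) (b' + 1 - r))) (b' + 1)
    rw [hsplit]
    have hterm : ∀ i ∈ Finset.range (b' + 1),
        ((-1 : RatFunc ℚ) ^ (i + 1) * RatFunc.X ^ ((i + 1) * (i + 1 - 1) / 2) *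
            myQ (a + 1) (i + 1) * qbinom (m - (i + 1)) (b' + 1 - (i + 1)))
          = ((-1 : RatFunc ℚ) ^ (i + 1) * RatFunc.X ^ ((i + 1) * (i + 1 - 1) / 2) *
              myQ a (i + 1) * qbinom (m - (i + 1)) (b' + 1 - (i + 1)))
            - RatFunc.X ^ a * ((-1 : RatFunc ℚ) ^ i * RatFunc.X ^ (i * (i - 1) / 2) *
              myQ a i * qbinom (m - 1 - i) (b' - i)) := by
      intro i _
      rw [myQ_pascal, show m - (i + 1) = m - 1 - i from by omega,
        show b' + 1 - (i + 1) = b' - i from by omega,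
        show (i + 1) - 1 = i from rfl]
      by_cases hia : i ≤ a
      · obtain ⟨c, rfl⟩ : ∃ c, a = i + c := ⟨a - i, by omega⟩
        rw [show i + c - i = c from by omega, tri i, pow_add, pow_add]
        ring
      · rw [show myQ a i = 0 from by rw [myQ, if_neg (by omega)]]
        ring
    rw [Finset.sum_congr rfl hterm, Finset.sum_sub_distrib, ← Finset.mul_sum]
    rw [show myQ (a + 1) 0 = myQ a 0 from by rw [myQ_zero, myQ_zero]]
    rw [sub_add_eq_add_sub]
    have hsplit2 := Finset.sum_range_succ'
      (fun r => ((-1 : RatFunc ℚ) ^ r * RatFunc.X ^ (r * (r - 1) / 2) * myQ a r *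
        qbinom (m - r) (b' + 1 - r))) (b' + 1)
    rw [← hsplit2, ih m (b' + 1) (by omega), ih (m - 1) b' (by omega)]
    obtain ⟨d, rfl⟩ : ∃ d, m = a + b' + d + 2 := ⟨m - a - b' - 2, by omega⟩
    rw [show a + b' + d + 2 - a = b' + d + 2 from by omega,
      show a + b' + d + 2 - 1 - a = b' + d + 1 from by omega,
      show a + b' + d + 2 - (a + 1) = b' + d + 1 from by omega,
      pascal b' d,
      show a * (b' + 1) = a * b' + a from by ring,
      show (a + 1) * (b' + 1) = a * b' + a + (b' + 1) from by ring,
      pow_add, pow_add, pow_add]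
    ring

/-- for all `m, a, b ≥ 0` with `a + b ≤ m`,
`∑_{r=0}^{min(a,b)} (-1)^r ν^{r(r-1)/2} [m-r]_ν!/([a-r]_ν![b-r]_ν![r]_ν!)
  = ν^{ab} [m-a-b]_ν! binom[ν]{m-b}{a} binom[ν]{m-a}{b}`. -/
theorem statement10 (m a b : ℕ) (h : a + b ≤ m) :
    ∑ r ∈ Finset.range (min a b + 1),
        ((-1 : RatFunc ℚ) ^ r * RatFunc.X ^ (r * (r - 1) / 2) *
          (qfac (m - r) / (qfac (a - r) * qfac (b - r) * qfac r))) =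
      RatFunc.X ^ (a * b) * qfac (m - a - b) * qbinom (m - b) a * qbinom (m - a) b := by
  have step1 : ∀ r ∈ Finset.range (min a b + 1),
      ((-1 : RatFunc ℚ) ^ r * RatFunc.X ^ (r * (r - 1) / 2) *
          (qfac (m - r) / (qfac (a - r) * qfac (b - r) * qfac r)))
        = qfac (m - b) / qfac a *
            ((-1 : RatFunc ℚ) ^ r * RatFunc.X ^ (r * (r - 1) / 2) * myQ a r *
              qbinom (m - r) (b - r)) := by
    intro r hr
    rw [Finset.mem_range] at hr
    have hra : r ≤ a := by omega
    have hrb : r ≤ b := by omega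
    rw [myQ, if_pos hra, qbinom, qbinom,
      show m - r - (b - r) = m - b from by omega]
    have h1 := qfac_ne_zero a
    have h2 := qfac_ne_zero r
    have h3 := qfac_ne_zero (a - r)
    have h4 := qfac_ne_zero (b - r)
    have h5 := qfac_ne_zero (m - b)
    field_simp
  rw [Finset.sum_congr rfl step1]
  rw [Finset.sum_subset (Finset.range_subset_range.mpr (show min a b + 1 ≤ b + 1 from by omega))
    (by
      intro r hr hr'
      rw [Finset.mem_range] at hr
      rw [Finset.mem_range] at hr'
      rw [show myQ a r = 0 from by rw [myQ, if_neg (by omega)]]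
      ring)]
  rw [← Finset.mul_sum, key a m b h]
  rw [show qbinom (m - b) a = qfac (m - b) / (qfac a * qfac (m - a - b)) from by
    rw [qbinom, show m - b - a = m - a - b from by omega]]
  have h1 := qfac_ne_zero a
  have h5 := qfac_ne_zero (m - b)
  have h6 := qfac_ne_zero (m - a - b)
  field_simp
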